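/- hm(c_min) equals the least cardinality of a family F of Lipschitz functions from 2^ℕ to 2^ℕ (each Lipschitz with some constant) such that for every (x,y) ∈ 2^ℕ × 2^ℕ there is f ∈ F with f(x) = y or f(y) = x. -/

import Mathlib

open Cardinal Topology

/-- The least index where two sequences differ. -/
noncomputable def Delta {α : Type*} (x y : ℕ → α) : ℕ := sInf {n | x n ≠ y n}

/-- A set is homogeneous for a pair-coloring `c` if `c` is constant on pairs of
distinct elements of the set. -/
def IsHomog {X : Type*} (c : X → X → Fin 2) (H : Set X) : Prop :=
  ∃ i : Fin 2, ∀ x ∈ H, ∀ y ∈ H, x ≠ y → c x y = i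

/-- The homogeneity number of a pair-coloring: the least cardinality of a family of
homogeneous sets covering the space. -/
noncomputable def hm {X : Type*} (c : X → X → Fin 2) : Cardinal :=
  sInf { κ | ∃ F : Set (Set X), #F = κ ∧ (∀ H ∈ F, IsHomog c H) ∧ ⋃₀ F = Set.univ }

/-- The homogeneity number of the restriction of a coloring to a subset. -/
noncomputable def hmOn {X : Type*} (c : X → X → Fin 2) (Y : Set X) : Cardinal :=
  sInf { κ | ∃ F : Set (Set X), #F = κ ∧ (∀ H ∈ F, H ⊆ Y ∧ IsHomog c H) ∧ ⋃₀ F = Y }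

/-- A pair-coloring is continuous if it is continuous on `X × X` minus the diagonal. -/
def ContColoring {X : Type*} [TopologicalSpace X] (c : X → X → Fin 2) : Prop :=
  Continuous fun p : {q : X × X // q.1 ≠ q.2} => c p.val.1 p.val.2

/-- Symmetry of a pair-coloring on distinct points. -/
def SymmColoring {X : Type*} (c : X → X → Fin 2) : Prop :=
  ∀ x y : X, x ≠ y → c x y = c y x

/-- A continuous pair-coloring is reduced if no nonempty open set is homogeneous. -/
def Reduced {X : Type*} [TopologicalSpace X] (c : X → X → Fin 2) : Prop :=
  ContColoring c ∧ ∀ U : Set X, IsOpen U → U.Nonempty → ¬ IsHomog c U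

/-- The coloring `c_min` on the Cantor space: the parity of the first difference. -/
noncomputable def cmin : (ℕ → Bool) → (ℕ → Bool) → Fin 2 :=
  fun x y => if Even (Delta x y) then 0 else 1

/-- The coloring `c_parity` on the Baire space: the parity of the first difference. -/
noncomputable def cparity : (ℕ → ℕ) → (ℕ → ℕ) → Fin 2 :=
  fun x y => if Even (Delta x y) then 0 else 1

/-- The standard metric on the Cantor space: `dist x y = 2 ^ (-Δ(x, y))` for `x ≠ y`. -/
noncomputable def distC (x y : ℕ → Bool) : ℝ := by classical exact
  if x = y then 0 else (2 : ℝ) ^ (-(Delta x y : ℤ))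

/-- `f` is Lipschitz with constant `a` on the Cantor space. -/
def LipWithC (a : ℝ) (f : (ℕ → Bool) → (ℕ → Bool)) : Prop :=
  ∀ x y : ℕ → Bool, distC (f x) (f y) ≤ a * distC x y

/-- `Cov(Lip_{a,b})`: the least cardinality of a family `F` of `a`-Lipschitz functions
together with a family `G` of `b`-Lipschitz functions on the Cantor space such that for
every pair `(x, y)` either `f x = y` for some `f ∈ F` or `g y = x` for some `g ∈ G`. -/
noncomputable def CovLip (a b : ℝ) : Cardinal :=
  sInf {μ | ∃ F G : Set ((ℕ → Bool) → (ℕ → Bool)),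
    #F + #G = μ ∧ (∀ f ∈ F, LipWithC a f) ∧ (∀ g ∈ G, LipWithC b g) ∧
    ∀ x y : ℕ → Bool, (∃ f ∈ F, f x = y) ∨ (∃ g ∈ G, g y = x)}

section Aux

lemma delta_lt_eq {x y : ℕ → Bool} {n : ℕ} (h : n < Delta x y) : x n = y n := by
  by_contra hne
  exact absurd (Nat.sInf_le (show n ∈ {m | x m ≠ y m} from hne)) (not_le.mpr h)

lemma delta_ne {x y : ℕ → Bool} (h : x ≠ y) : x (Delta x y) ≠ y (Delta x y) := by
  have hs : {n | x n ≠ y n}.Nonempty := by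
    rcases Function.ne_iff.mp h with ⟨n, hn⟩
    exact ⟨n, hn⟩
  exact Nat.sInf_mem hs

lemma distC_nonneg (x y : ℕ → Bool) : 0 ≤ distC x y := by
  unfold distC
  split
  · exact le_refl 0
  · positivity

/-- even track -/
def evt (z : ℕ → Bool) : ℕ → Bool := fun n => z (2 * n)
/-- odd track -/
def odt (z : ℕ → Bool) : ℕ → Bool := fun n => z (2 * n + 1)
/-- merge -/
def mg (x y : ℕ → Bool) : ℕ → Bool := fun n => if n % 2 = 0 then x (n / 2) else y (n / 2)

lemma evt_mg (x y : ℕ → Bool) : evt (mg x y) = x := by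
  funext n
  have h1 : (2 * n) % 2 = 0 := by omega
  have h2 : (2 * n) / 2 = n := by omega
  simp [evt, mg, h1, h2]

lemma odt_mg (x y : ℕ → Bool) : odt (mg x y) = y := by
  funext n
  have h1 : ¬ ((2 * n + 1) % 2 = 0) := by omega
  have h2 : (2 * n + 1) / 2 = n := by omega
  simp [odt, mg, h1, h2]

lemma evt_delta_ne {z z' : ℕ → Bool} (hne : z ≠ z') (hev : Even (Delta z z')) :
    evt z (Delta z z' / 2) ≠ evt z' (Delta z z' / 2) := by
  have hmod := Nat.even_iff.mp hev
  have h2 : 2 * (Delta z z' / 2) = Delta z z' := by omega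
  unfold evt
  rw [h2]
  exact delta_ne hne

lemma odt_delta_ne {z z' : ℕ → Bool} (hne : z ≠ z') (hodd : ¬ Even (Delta z z')) :
    odt z (Delta z z' / 2) ≠ odt z' (Delta z z' / 2) := by
  have hmod : Delta z z' % 2 = 1 := Nat.odd_iff.mp (Nat.not_even_iff_odd.mp hodd)
  have h2 : 2 * (Delta z z' / 2) + 1 = Delta z z' := by omega
  unfold odt
  rw [h2]
  exact delta_ne hne

/-- extension of a consistent partial prefix-respecting assignment to a total one -/
lemma extend_partial (A : Set (ℕ → Bool)) (q : (ℕ → Bool) → (ℕ → Bool))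
    (hq : ∀ u ∈ A, ∀ v ∈ A, ∀ n : ℕ, (∀ k, k ≤ n → u k = v k) → q u n = q v n) :
    ∃ f : (ℕ → Bool) → (ℕ → Bool),
      (∀ u ∈ A, f u = q u) ∧
      ∀ x y : ℕ → Bool, ∀ n : ℕ, (∀ k, k ≤ n → x k = y k) → f x n = f y n := by
  classical
  refine ⟨fun x n => if h : ∃ u, u ∈ A ∧ ∀ k, k ≤ n → u k = x k then q h.choose n else false,
    ?_, ?_⟩
  · intro u hu
    funext n
    dsimp only
    have hex : ∃ v, v ∈ A ∧ ∀ k, k ≤ n → v k = u k := ⟨u, hu, fun _ _ => rfl⟩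
    rw [dif_pos hex]
    exact hq _ hex.choose_spec.1 u hu n hex.choose_spec.2
  · intro x y n hxy
    dsimp only
    by_cases hx : ∃ u, u ∈ A ∧ ∀ k, k ≤ n → u k = x k
    · have hy : ∃ u, u ∈ A ∧ ∀ k, k ≤ n → u k = y k :=
        ⟨hx.choose, hx.choose_spec.1, fun k hk => (hx.choose_spec.2 k hk).trans (hxy k hk)⟩
      rw [dif_pos hx, dif_pos hy]
      exact hq _ hx.choose_spec.1 _ hy.choose_spec.1 n
        (fun k hk => (hx.choose_spec.2 k hk).trans
          ((hxy k hk).trans (hy.choose_spec.2 k hk).symm))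
    · have hy : ¬ ∃ u, u ∈ A ∧ ∀ k, k ≤ n → u k = y k := by
        rintro ⟨u, hu, hagree⟩
        exact hx ⟨u, hu, fun k hk => (hagree k hk).trans (hxy k hk).symm⟩
      rw [dif_neg hx, dif_neg hy]

lemma lipWithC_one (f : (ℕ → Bool) → (ℕ → Bool))
    (hf : ∀ x y : ℕ → Bool, ∀ n : ℕ, (∀ k, k ≤ n → x k = y k) → f x n = f y n) :
    LipWithC 1 f := by
  intro x y
  rw [one_mul]
  by_cases hfe : f x = f y
  · have h0 : distC (f x) (f y) = 0 := by unfold distC; rw [if_pos hfe]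
    rw [h0]
    exact distC_nonneg x y
  · have hxy : x ≠ y := by rintro rfl; exact hfe rfl
    have hdle : Delta x y ≤ Delta (f x) (f y) := by
      by_contra hlt
      push_neg at hlt
      exact delta_ne hfe (hf x y _ (fun k hk => delta_lt_eq (lt_of_le_of_lt hk hlt)))
    unfold distC
    rw [if_neg hfe, if_neg hxy]
    exact zpow_le_zpow_right₀ one_le_two (neg_le_neg (Nat.cast_le.mpr hdle))

end Aux

section HomogFun

lemma homog0_fun (H : Set (ℕ → Bool))
    (hH : ∀ z ∈ H, ∀ z' ∈ H, z ≠ z' → cmin z z' = 0) :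
    ∃ f, LipWithC 1 f ∧ ∀ z ∈ H, f (evt z) = odt z := by
  classical
  have heven : ∀ z ∈ H, ∀ z' ∈ H, z ≠ z' → Even (Delta z z') := by
    intro z hz z' hz' hne
    have h := hH z hz z' hz' hne
    by_contra hodd
    unfold cmin at h
    rw [if_neg hodd] at h
    exact one_ne_zero h
  have hinj : ∀ z ∈ H, ∀ z' ∈ H, evt z = evt z' → z = z' := by
    intro z hz z' hz' hev
    by_contra hne
    exact evt_delta_ne hne (heven z hz z' hz' hne) (by rw [hev])
  set q : (ℕ → Bool) → (ℕ → Bool) := fun u =>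
    if h : ∃ z, z ∈ H ∧ evt z = u then odt h.choose else fun _ => false with hqdef
  have hqz : ∀ z ∈ H, q (evt z) = odt z := by
    intro z hz
    have hex : ∃ w, w ∈ H ∧ evt w = evt z := ⟨z, hz, rfl⟩
    rw [hqdef]
    dsimp only
    rw [dif_pos hex]
    rw [hinj _ hex.choose_spec.1 z hz hex.choose_spec.2]
  have hq : ∀ u ∈ {u | ∃ z, z ∈ H ∧ evt z = u}, ∀ v ∈ {u | ∃ z, z ∈ H ∧ evt z = u},
      ∀ n : ℕ, (∀ k, k ≤ n → u k = v k) → q u n = q v n := by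
    rintro u ⟨zu, hzu, rfl⟩ v ⟨zv, hzv, rfl⟩ n hagree
    rw [hqz zu hzu, hqz zv hzv]
    by_cases hzz : zu = zv
    · rw [hzz]
    · have hev := heven zu hzu zv hzv hzz
      have hdn : n < Delta zu zv / 2 := by
        by_contra hle
        push_neg at hle
        exact evt_delta_ne hzz hev (hagree _ hle)
      have h2 : 2 * n + 1 < Delta zu zv := by
        have := Nat.even_iff.mp hev
        omega
      show zu (2 * n + 1) = zv (2 * n + 1)
      exact delta_lt_eq h2
  obtain ⟨f, hfA, hfpre⟩ := extend_partial _ q hq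
  exact ⟨f, lipWithC_one f hfpre,
    fun z hz => by rw [hfA (evt z) ⟨z, hz, rfl⟩, hqz z hz]⟩

lemma homog1_fun (H : Set (ℕ → Bool))
    (hH : ∀ z ∈ H, ∀ z' ∈ H, z ≠ z' → cmin z z' = 1) :
    ∃ f, LipWithC 1 f ∧ ∀ z ∈ H, f (odt z) = evt z := by
  classical
  have hodd : ∀ z ∈ H, ∀ z' ∈ H, z ≠ z' → ¬ Even (Delta z z') := by
    intro z hz z' hz' hne
    have h := hH z hz z' hz' hne
    by_contra hev
    unfold cmin at h
    rw [if_pos hev] at h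
    exact zero_ne_one h
  have hinj : ∀ z ∈ H, ∀ z' ∈ H, odt z = odt z' → z = z' := by
    intro z hz z' hz' hod
    by_contra hne
    exact odt_delta_ne hne (hodd z hz z' hz' hne) (by rw [hod])
  set q : (ℕ → Bool) → (ℕ → Bool) := fun u =>
    if h : ∃ z, z ∈ H ∧ odt z = u then evt h.choose else fun _ => false with hqdef
  have hqz : ∀ z ∈ H, q (odt z) = evt z := by
    intro z hz
    have hex : ∃ w, w ∈ H ∧ odt w = odt z := ⟨z, hz, rfl⟩
    rw [hqdef]
    dsimp only
    rw [dif_pos hex]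
    rw [hinj _ hex.choose_spec.1 z hz hex.choose_spec.2]
  have hq : ∀ u ∈ {u | ∃ z, z ∈ H ∧ odt z = u}, ∀ v ∈ {u | ∃ z, z ∈ H ∧ odt z = u},
      ∀ n : ℕ, (∀ k, k ≤ n → u k = v k) → q u n = q v n := by
    rintro u ⟨zu, hzu, rfl⟩ v ⟨zv, hzv, rfl⟩ n hagree
    rw [hqz zu hzu, hqz zv hzv]
    by_cases hzz : zu = zv
    · rw [hzz]
    · have hod := hodd zu hzu zv hzv hzz
      have hdn : n < Delta zu zv / 2 := by
        by_contra hle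
        push_neg at hle
        exact odt_delta_ne hzz hod (hagree _ hle)
      have hmod : Delta zu zv % 2 = 1 := Nat.odd_iff.mp (Nat.not_even_iff_odd.mp hod)
      have h2 : 2 * n < Delta zu zv := by omega
      show zu (2 * n) = zv (2 * n)
      exact delta_lt_eq h2
  obtain ⟨f, hfA, hfpre⟩ := extend_partial _ q hq
  exact ⟨f, lipWithC_one f hfpre,
    fun z hz => by rw [hfA (odt z) ⟨z, hz, rfl⟩, hqz z hz]⟩

lemma homog_fun (H : Set (ℕ → Bool)) (hH : IsHomog cmin H) :
    ∃ f, LipWithC 1 f ∧ ∀ z ∈ H, f (evt z) = odt z ∨ f (odt z) = evt z := by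
  obtain ⟨i, hi⟩ := hH
  by_cases h0 : i = 0
  · obtain ⟨f, h1, h2⟩ := homog0_fun H
      (fun z hz z' hz' hne => (hi z hz z' hz' hne).trans (by rw [h0]))
    exact ⟨f, h1, fun z hz => Or.inl (h2 z hz)⟩
  · have h1 : i = 1 := by omega
    obtain ⟨f, hl, h2⟩ := homog1_fun H
      (fun z hz z' hz' hne => (hi z hz z' hz' hne).trans (by rw [h1]))
    exact ⟨f, hl, fun z hz => Or.inr (h2 z hz)⟩

end HomogFun


/-- The key quantitative Lipschitz property. -/
def LipDelta (f : (ℕ → Bool) → (ℕ → Bool)) (k : ℕ) : Prop :=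
  ∀ u v : ℕ → Bool, u ≠ v → f u ≠ f v → Delta u v ≤ Delta (f u) (f v) + k

lemma lipDelta_of {f : (ℕ → Bool) → (ℕ → Bool)} (h : ∃ a : ℝ, LipWithC a f) :
    ∃ k : ℕ, LipDelta f k := by
  obtain ⟨a, ha⟩ := h
  obtain ⟨n, hn⟩ := exists_nat_ge a
  refine ⟨n, fun u v huv hfuv => ?_⟩
  have h1 := ha u v
  have h2 : a ≤ (2 : ℝ) ^ (n : ℤ) := by
    refine hn.trans ?_
    have : (n : ℝ) ≤ (2 : ℝ) ^ (n : ℕ) := by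
      exact_mod_cast (Nat.lt_two_pow_self (n := n)).le
    rwa [zpow_natCast]
  have hd : distC u v = (2:ℝ) ^ (-(Delta u v : ℤ)) := by
    unfold distC; rw [if_neg huv]
  have hdf : distC (f u) (f v) = (2:ℝ) ^ (-(Delta (f u) (f v) : ℤ)) := by
    unfold distC; rw [if_neg hfuv]
  rw [hd, hdf] at h1
  have h3 : (2:ℝ) ^ (-(Delta (f u) (f v) : ℤ)) ≤ (2:ℝ) ^ ((n : ℤ) - (Delta u v : ℤ)) := by
    calc (2:ℝ) ^ (-(Delta (f u) (f v) : ℤ)) ≤ a * (2:ℝ) ^ (-(Delta u v : ℤ)) := h1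
    _ ≤ (2:ℝ) ^ (n : ℤ) * (2:ℝ) ^ (-(Delta u v : ℤ)) := by
        apply mul_le_mul_of_nonneg_right h2
        positivity
    _ = (2:ℝ) ^ ((n : ℤ) - (Delta u v : ℤ)) := by
        rw [← zpow_add₀ (by norm_num : (2:ℝ) ≠ 0)]
        ring_nf
  have h4 : -(Delta (f u) (f v) : ℤ) ≤ (n : ℤ) - (Delta u v : ℤ) :=
    (zpow_le_zpow_iff_right₀ (by norm_num : (1:ℝ) < 2)).mp h3
  omega

/-- positions of the stretching embedding -/
def pfun (j : ℕ) : ℕ := 4 ^ (j + 1) + j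

lemma pfun_strictMono : StrictMono pfun := by
  apply strictMono_nat_of_lt_succ
  intro n
  have hb : 1 ≤ (4:ℕ) ^ n := Nat.one_le_pow _ _ (by norm_num)
  unfold pfun
  omega

lemma pfun_parity (j : ℕ) : pfun j % 2 = j % 2 := by
  unfold pfun
  omega

lemma pfun_growth (K j : ℕ) (h : K ≤ j) : pfun j + 2 * K + 2 < pfun (j + 1) := by
  have h2 : j + 1 ≤ 4 ^ j := by
    calc j + 1 ≤ 2 ^ j := Nat.lt_two_pow_self (n := j)
    _ ≤ 4 ^ j := Nat.pow_le_pow_left (by norm_num) _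
  unfold pfun
  omega

/-- the stretching embedding -/
noncomputable def Psi (w : ℕ → Bool) : ℕ → Bool := by
  classical
  exact fun n => if h : ∃ j, pfun j = n then w h.choose else false

lemma Psi_at (w : ℕ → Bool) (j : ℕ) : Psi w (pfun j) = w j := by
  have hex : ∃ i, pfun i = pfun j := ⟨j, rfl⟩
  unfold Psi
  rw [dif_pos hex]
  have hspec : pfun hex.choose = pfun j := hex.choose_spec
  rw [pfun_strictMono.injective hspec]

/-- Type 0 pieces are even-homogeneous. -/
lemma piece0 (f : (ℕ → Bool) → (ℕ → Bool)) (k : ℕ) (hf : LipDelta f k)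
    (w w' : ℕ → Bool)
    (hw : f (evt (Psi w)) = odt (Psi w)) (hw' : f (evt (Psi w')) = odt (Psi w'))
    (hpre : ∀ i, i ≤ k → w i = w' i) (hne : w ≠ w') : Even (Delta w w') := by
  set δ := Delta w w' with hδ
  have hδk : k < δ := by
    by_contra hle
    push_neg at hle
    exact delta_ne hne (hpre δ hle)
  by_contra hodd
  have hδpar : δ % 2 = 1 := Nat.odd_iff.mp (Nat.not_even_iff_odd.mp hodd)
  have hppar : pfun δ % 2 = 1 := by rw [pfun_parity]; exact hδpar
  set q := pfun δ / 2 with hqdef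
  have hq1 : pfun δ = 2 * q + 1 := by omega
  -- the images differ at pfun δ
  have hzδ : Psi w (pfun δ) ≠ Psi w' (pfun δ) := by
    rw [Psi_at, Psi_at]; exact delta_ne hne
  -- the odd tracks differ at q
  have hodtq : odt (Psi w) q ≠ odt (Psi w') q := by
    show Psi w (2 * q + 1) ≠ Psi w' (2 * q + 1)
    rw [← hq1]; exact hzδ
  have hodtne : odt (Psi w) ≠ odt (Psi w') := fun h => hodtq (by rw [h])
  have hevtne : evt (Psi w) ≠ evt (Psi w') := by
    intro h
    exact hodtne (by rw [← hw, ← hw', h])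
  -- odd track distance ≤ q
  have hb : Delta (odt (Psi w)) (odt (Psi w')) ≤ q := Nat.sInf_le hodtq
  -- even tracks agree below pfun (δ+1) / 2
  have hcl : ∀ m, 2 * m < pfun (δ + 1) → evt (Psi w) m = evt (Psi w') m := by
    intro m hm
    show Psi w (2 * m) = Psi w' (2 * m)
    unfold Psi
    by_cases hex : ∃ j, pfun j = 2 * m
    · rw [dif_pos hex, dif_pos hex]
      have hspec : pfun hex.choose = 2 * m := hex.choose_spec
      have hilt : hex.choose < δ + 1 := by
        by_contra hge
        push_neg at hge
        have := pfun_strictMono.monotone hge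
        omega
      have hine : hex.choose ≠ δ := by
        intro hcontra
        rw [hcontra] at hspec
        omega
      exact delta_lt_eq (show hex.choose < δ by omega)
    · rw [dif_neg hex, dif_neg hex]
  have hm2 : pfun (δ + 1) ≤ 2 * Delta (evt (Psi w)) (evt (Psi w')) := by
    by_contra hlt
    push_neg at hlt
    exact delta_ne hevtne (hcl _ hlt)
  -- Lipschitz estimate
  have hlip : Delta (evt (Psi w)) (evt (Psi w')) ≤ Delta (odt (Psi w)) (odt (Psi w')) + k := by
    have h := hf (evt (Psi w)) (evt (Psi w')) hevtne (by rw [hw, hw']; exact hodtne)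
    rwa [hw, hw'] at h
  have hgr : pfun δ + 2 * k + 2 < pfun (δ + 1) := pfun_growth k δ (le_of_lt hδk)
  omega

/-- Type 1 pieces are odd-homogeneous. -/
lemma piece1 (f : (ℕ → Bool) → (ℕ → Bool)) (k : ℕ) (hf : LipDelta f k)
    (w w' : ℕ → Bool)
    (hw : f (odt (Psi w)) = evt (Psi w)) (hw' : f (odt (Psi w')) = evt (Psi w'))
    (hpre : ∀ i, i ≤ k → w i = w' i) (hne : w ≠ w') : ¬ Even (Delta w w') := by
  set δ := Delta w w' with hδ
  have hδk : k < δ := by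
    by_contra hle
    push_neg at hle
    exact delta_ne hne (hpre δ hle)
  intro heven
  have hδpar : δ % 2 = 0 := Nat.even_iff.mp heven
  have hppar : pfun δ % 2 = 0 := by rw [pfun_parity]; exact hδpar
  set q := pfun δ / 2 with hqdef
  have hq1 : pfun δ = 2 * q := by omega
  have hzδ : Psi w (pfun δ) ≠ Psi w' (pfun δ) := by
    rw [Psi_at, Psi_at]; exact delta_ne hne
  have hevtq : evt (Psi w) q ≠ evt (Psi w') q := by
    show Psi w (2 * q) ≠ Psi w' (2 * q)
    rw [← hq1]; exact hzδ
  have hevtne : evt (Psi w) ≠ evt (Psi w') := fun h => hevtq (by rw [h])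
  have hodtne : odt (Psi w) ≠ odt (Psi w') := by
    intro h
    exact hevtne (by rw [← hw, ← hw', h])
  have hb : Delta (evt (Psi w)) (evt (Psi w')) ≤ q := Nat.sInf_le hevtq
  have hcl : ∀ m, 2 * m + 1 < pfun (δ + 1) → odt (Psi w) m = odt (Psi w') m := by
    intro m hm
    show Psi w (2 * m + 1) = Psi w' (2 * m + 1)
    unfold Psi
    by_cases hex : ∃ j, pfun j = 2 * m + 1
    · rw [dif_pos hex, dif_pos hex]
      have hspec : pfun hex.choose = 2 * m + 1 := hex.choose_spec
      have hilt : hex.choose < δ + 1 := by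
        by_contra hge
        push_neg at hge
        have := pfun_strictMono.monotone hge
        omega
      have hine : hex.choose ≠ δ := by
        intro hcontra
        rw [hcontra] at hspec
        omega
      exact delta_lt_eq (show hex.choose < δ by omega)
    · rw [dif_neg hex, dif_neg hex]
  have hm2 : pfun (δ + 1) ≤ 2 * Delta (odt (Psi w)) (odt (Psi w')) + 1 := by
    by_contra hlt
    push_neg at hlt
    exact delta_ne hodtne (hcl _ (by omega))
  have hlip : Delta (odt (Psi w)) (odt (Psi w')) ≤ Delta (evt (Psi w)) (evt (Psi w')) + k := by
    have h := hf (odt (Psi w)) (odt (Psi w')) hodtne (by rw [hw, hw']; exact hevtne)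
    rwa [hw, hw'] at h
  have hgr : pfun δ + 2 * k + 2 < pfun (δ + 1) := pfun_growth k δ (le_of_lt hδk)
  omega

section FiniteDiag

/-- fill a finite prefix with `false` -/
def extL (s : List Bool) : ℕ → Bool := fun n =>
  if h : n < s.length then s[n] else false

def Exts (x : ℕ → Bool) (s : List Bool) : Prop :=
  ∀ i, (h : i < s.length) → x i = s[i]

lemma exts_extL (s : List Bool) : Exts (extL s) s := by
  intro i h
  unfold extL
  rw [dif_pos h]

lemma exts_append {x : ℕ → Bool} {s u : List Bool} (h : Exts x (s ++ u)) : Exts x s := by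
  intro i hi
  have hi' : i < (s ++ u).length := by
    rw [List.length_append]; omega
  have := h i hi'
  rwa [List.getElem_append_left hi] at this

/-- values of `f` on a long cylinder are determined -/
lemma det {f : (ℕ → Bool) → (ℕ → Bool)} {k : ℕ} (hf : LipDelta f k)
    (s : List Bool) (m : ℕ) (hm : m + k < s.length)
    {x y : ℕ → Bool} (hx : Exts x s) (hy : Exts y s) : f x m = f y m := by
  by_cases hxy : x = y
  · rw [hxy]
  by_cases hfxy : f x = f y
  · rw [hfxy]
  have hlen : s.length ≤ Delta x y := by
    by_contra hlt
    push_neg at hlt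
    exact delta_ne hxy ((hx _ hlt).trans (hy _ hlt).symm)
  have := hf x y hxy hfxy
  exact delta_lt_eq (show m < Delta (f x) (f y) by omega)

lemma exts_concat {x : ℕ → Bool} {s : List Bool} {b : Bool} (h : Exts x (s ++ [b])) :
    x s.length = b := by
  have hlt : s.length < (s ++ [b]).length := by simp
  have := h s.length hlt
  simpa using this

lemma avoid (fs : List ((ℕ → Bool) → (ℕ → Bool)))
    (hk : ∀ f ∈ fs, ∃ k, LipDelta f k) :
    ∀ s t : List Bool, ∃ x y : ℕ → Bool,
      Exts x s ∧ Exts y t ∧ ∀ f ∈ fs, f x ≠ y ∧ f y ≠ x := by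
  induction fs with
  | nil =>
    intro s t
    exact ⟨extL s, extL t, exts_extL s, exts_extL t, by simp⟩
  | cons f fs ih =>
    intro s t
    obtain ⟨k, hfk⟩ := hk f (List.mem_cons_self (a := f) (l := fs))
    set s1 := s ++ List.replicate (t.length + k + 1) false with hs1
    have hs1L : s1.length = s.length + (t.length + k + 1) := by
      rw [hs1, List.length_append, List.length_replicate]
    set c1 := f (extL s1) t.length with hc1
    set t1 := t ++ [!c1] with ht1
    have ht1L : t1.length = t.length + 1 := by
      rw [ht1, List.length_append, List.length_singleton]
    set t2 := t1 ++ List.replicate (s1.length + k + 1) false with ht2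
    have ht2L : t2.length = t1.length + (s1.length + k + 1) := by
      rw [ht2, List.length_append, List.length_replicate]
    set c2 := f (extL t2) s1.length with hc2
    set s2 := s1 ++ [!c2] with hs2
    obtain ⟨x, y, hxs, hyt, hrest⟩ := ih (fun g hg => hk g (List.mem_cons_of_mem f hg)) s2 t2
    have hxs1 : Exts x s1 := exts_append (s := s1) (u := [!c2]) hxs
    have hyt1 : Exts y t1 :=
      exts_append (s := t1) (u := List.replicate (s1.length + k + 1) false) hyt
    refine ⟨x, y,
      exts_append (s := s) (u := List.replicate (t.length + k + 1) false) hxs1,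
      exts_append (s := t) (u := [!c1]) hyt1, ?_⟩
    intro g hg
    rcases List.mem_cons.mp hg with hgf | hgtail
    · subst hgf
      constructor
      · -- g x ≠ y : they differ at position t.length
        intro hcontra
        have h1 : g x t.length = c1 :=
          det hfk s1 t.length (by omega) hxs1 (exts_extL s1)
        have h2 : y t.length = !c1 := exts_concat (s := t) (b := !c1) hyt1
        rw [hcontra] at h1
        rw [h1] at h2
        simp at h2
      · -- g y ≠ x : they differ at position s1.length
        intro hcontra
        have h1 : g y s1.length = c2 :=
          det hfk t2 s1.length (by omega) hyt (exts_extL t2)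
        have h2 : x s1.length = !c2 := exts_concat (s := s1) (b := !c2) hxs
        rw [hcontra] at h1
        rw [h1] at h2
        simp at h2
    · exact hrest g hgtail

end FiniteDiag

section HardMain

open Cardinal

lemma hard_le (F : Set ((ℕ → Bool) → (ℕ → Bool)))
    (hFlip : ∀ f ∈ F, ∃ a : ℝ, LipWithC a f)
    (hFcov : ∀ x y : ℕ → Bool, ∃ f ∈ F, f x = y ∨ f y = x) :
    hm cmin ≤ #F := by
  classical
  -- F must be infinite
  have hinf : F.Infinite := by
    by_contra hfin
    rw [Set.not_infinite] at hfin
    obtain ⟨x, y, -, -, hxy⟩ := avoid hfin.toFinset.toList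
      (fun f hf => lipDelta_of (hFlip f (by
        rwa [Finset.mem_toList, Set.Finite.mem_toFinset] at hf))) [] []
    obtain ⟨f, hfF, hcase⟩ := hFcov x y
    have hmem : f ∈ hfin.toFinset.toList := by
      rw [Finset.mem_toList, Set.Finite.mem_toFinset]; exact hfF
    rcases hcase with h | h
    · exact (hxy f hmem).1 h
    · exact (hxy f hmem).2 h
  choose K HK using fun f : ↥F => lipDelta_of (hFlip f.1 f.2)
  -- the homogeneous pieces, pulled back along Psi
  set piece : ↥F × List Bool × Bool → Set (ℕ → Bool) := fun q =>
    {w | (∀ i, (h : i < q.2.1.length) → w i = q.2.1[i]) ∧ q.2.1.length = K q.1 + 1 ∧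
      (q.2.2 = true → q.1.1 (evt (Psi w)) = odt (Psi w)) ∧
      (q.2.2 = false → q.1.1 (odt (Psi w)) = evt (Psi w))} with hpiece
  have hhomog : ∀ q, IsHomog cmin (piece q) := by
    rintro ⟨f, l, b⟩
    rcases Bool.dichotomy b with hb | hb
    · -- type 1 pieces : odd
      refine ⟨1, ?_⟩
      rintro w ⟨hw1, hw2, -, hw4⟩ w' ⟨hw'1, hw'2, -, hw'4⟩ hne
      have hrel := hw4 hb
      have hrel' := hw'4 hb
      have hw2' : l.length = K f + 1 := hw2
      have hpre : ∀ i, i ≤ K f → w i = w' i := by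
        intro i hi
        have hlt : i < l.length := by omega
        rw [hw1 i hlt, hw'1 i hlt]
      have hodd := piece1 f.1 (K f) (HK f) w w' hrel hrel' hpre hne
      unfold cmin
      rw [if_neg hodd]
    · -- type 0 pieces : even
      refine ⟨0, ?_⟩
      rintro w ⟨hw1, hw2, hw3, -⟩ w' ⟨hw'1, hw'2, hw'3, -⟩ hne
      have hrel := hw3 hb
      have hrel' := hw'3 hb
      have hw2' : l.length = K f + 1 := hw2
      have hpre : ∀ i, i ≤ K f → w i = w' i := by
        intro i hi
        have hlt : i < l.length := by omega
        rw [hw1 i hlt, hw'1 i hlt]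
      have heven := piece0 f.1 (K f) (HK f) w w' hrel hrel' hpre hne
      unfold cmin
      rw [if_pos heven]
  have hcover : ⋃₀ (Set.range piece) = Set.univ := by
    apply Set.eq_univ_of_forall
    intro w
    obtain ⟨f, hfF, hcase⟩ := hFcov (evt (Psi w)) (odt (Psi w))
    rcases hcase with h | h
    · refine ⟨piece (⟨f, hfF⟩, List.ofFn (fun i : Fin (K ⟨f, hfF⟩ + 1) => w i), true),
        ⟨_, rfl⟩, ?_, ?_, ?_, ?_⟩
      · intro i hi
        rw [List.getElem_ofFn]
      · simp
      · intro _; exact h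
      · intro hcontra; exact absurd hcontra (by simp)
    · refine ⟨piece (⟨f, hfF⟩, List.ofFn (fun i : Fin (K ⟨f, hfF⟩ + 1) => w i), false),
        ⟨_, rfl⟩, ?_, ?_, ?_, ?_⟩
      · intro i hi
        rw [List.getElem_ofFn]
      · simp
      · intro hcontra; exact absurd hcontra (by simp)
      · intro _; exact h
  have h2 : hm cmin ≤ #(Set.range piece) := by
    apply csInf_le'
    exact ⟨Set.range piece, rfl, by rintro H ⟨q, rfl⟩; exact hhomog q, hcover⟩
  refine h2.trans (le_trans Cardinal.mk_range_le ?_)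
  haveI hsub : Infinite ↥F := hinf.to_subtype
  have hFaleph : ℵ₀ ≤ #↥F := Cardinal.aleph0_le_mk ↥F
  calc #(↥F × List Bool × Bool) = #↥F * #(List Bool × Bool) := by
        rw [Cardinal.mk_prod, Cardinal.lift_id, Cardinal.lift_id]
    _ ≤ #↥F * ℵ₀ := by
        apply mul_le_mul_right
        exact Cardinal.mk_le_aleph0
    _ = #↥F := Cardinal.mul_eq_left hFaleph hFaleph Cardinal.aleph0_ne_zero

end HardMain

/-- `hm(c_min)` equals the least cardinality of a family `F` of Lipschitz functions
(each with some constant) from the Cantor space to itself such that every pair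
`(x, y)` is covered by some `f ∈ F`. -/
theorem stmt15 :
    hm cmin = sInf {μ : Cardinal | ∃ F : Set ((ℕ → Bool) → (ℕ → Bool)),
      #F = μ ∧ (∀ f ∈ F, ∃ a : ℝ, LipWithC a f) ∧
      ∀ x y : ℕ → Bool, ∃ f ∈ F, f x = y ∨ f y = x} := by
  classical
  apply le_antisymm
  · -- hm ≤ sInf R
    apply le_csInf
    · -- R is nonempty : the constant functions form a covering family
      refine ⟨_, Set.range (fun c : ℕ → Bool => (fun _ => c : (ℕ → Bool) → (ℕ → Bool))),
        rfl, ?_, ?_⟩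
      · rintro f ⟨c, rfl⟩
        refine ⟨1, fun x y => ?_⟩
        have h0 : distC c c = 0 := by unfold distC; rw [if_pos rfl]
        show distC c c ≤ 1 * distC x y
        rw [h0, one_mul]
        exact distC_nonneg x y
      · intro x y
        exact ⟨fun _ => y, ⟨y, rfl⟩, Or.inl rfl⟩
    · rintro μ ⟨F, rfl, hFlip, hFcov⟩
      exact hard_le F hFlip hFcov
  · -- sInf R ≤ hm
    unfold hm
    apply le_csInf
    · -- the family of singletons is a homogeneous cover
      refine ⟨_, Set.range (fun x : ℕ → Bool => ({x} : Set (ℕ → Bool))), rfl, ?_, ?_⟩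
      · rintro H ⟨x, rfl⟩
        refine ⟨0, ?_⟩
        rintro a ha b hb hab
        rw [Set.mem_singleton_iff] at ha hb
        exact absurd (ha.trans hb.symm) hab
      · apply Set.eq_univ_of_forall
        intro z
        exact ⟨{z}, ⟨z, rfl⟩, rfl⟩
    · rintro κ ⟨𝓗, rfl, hhom, huniv⟩
      choose f hf using fun H : ↥𝓗 => homog_fun H.1 (hhom H.1 H.2)
      have hmem : #(Set.range f) ∈ {μ : Cardinal | ∃ F : Set ((ℕ → Bool) → (ℕ → Bool)),
          #F = μ ∧ (∀ g ∈ F, ∃ a : ℝ, LipWithC a g) ∧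
          ∀ x y : ℕ → Bool, ∃ g ∈ F, g x = y ∨ g y = x} := by
        refine ⟨Set.range f, rfl, ?_, ?_⟩
        · rintro g ⟨H, rfl⟩
          exact ⟨1, (hf H).1⟩
        · intro x y
          have hz : mg x y ∈ ⋃₀ 𝓗 := by rw [huniv]; exact Set.mem_univ _
          obtain ⟨H, hH, hzH⟩ := hz
          rcases (hf ⟨H, hH⟩).2 _ hzH with h | h
          · refine ⟨f ⟨H, hH⟩, ⟨_, rfl⟩, Or.inl ?_⟩
            rw [evt_mg, odt_mg] at h
            exact h
          · refine ⟨f ⟨H, hH⟩, ⟨_, rfl⟩, Or.inr ?_⟩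
            rw [evt_mg, odt_mg] at h
            exact h
      exact le_trans (csInf_le' hmem) Cardinal.mk_range_le
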